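/- For the equality relation on D abstracted by m : D → D̂: Type I holds on (â, b̂) iff m⁻¹(â) = m⁻¹(b̂) and this common preimage is a singleton; Type II holds iff m⁻¹(â) and m⁻¹(b̂) are nonempty and disjoint; Type III holds iff m⁻¹(â) ∩ m⁻¹(b̂) ≠ ∅ and (m⁻¹(â) ∪ m⁻¹(b̂)) has at least two elements. -/
import Mathlib


def eqHat {D Dh : Type*} (m : D → Dh) (ah bh : Dh) : Prop :=
  ∃ x y : D, m x = ah ∧ m y = bh ∧ x = y

def negEqHat {D Dh : Type*} (m : D → Dh) (ah bh : Dh) : Prop :=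
  ∃ x y : D, m x = ah ∧ m y = bh ∧ x ≠ y

/-- Characterization of the types of the abstracted equality relation. -/
theorem stmt_17 {D Dh : Type*} (m : D → Dh) (ah bh : Dh)
    (hna : (m ⁻¹' {ah}).Nonempty) (hnb : (m ⁻¹' {bh}).Nonempty) :
    ((eqHat m ah bh ∧ ¬ negEqHat m ah bh) ↔
      (m ⁻¹' {ah} = m ⁻¹' {bh} ∧ ∃ d : D, m ⁻¹' {ah} = {d})) ∧
    ((negEqHat m ah bh ∧ ¬ eqHat m ah bh) ↔
      ((m ⁻¹' {ah}).Nonempty ∧ (m ⁻¹' {bh}).Nonempty ∧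
        Disjoint (m ⁻¹' {ah}) (m ⁻¹' {bh}))) ∧
    ((eqHat m ah bh ∧ negEqHat m ah bh) ↔
      ((m ⁻¹' {ah} ∩ m ⁻¹' {bh}).Nonempty ∧
        ∃ x ∈ m ⁻¹' {ah} ∪ m ⁻¹' {bh}, ∃ y ∈ m ⁻¹' {ah} ∪ m ⁻¹' {bh}, x ≠ y)) := by
  have heq : eqHat m ah bh ↔ (m ⁻¹' {ah} ∩ m ⁻¹' {bh}).Nonempty := by
    constructor
    · rintro ⟨x, y, hx, hy, rfl⟩
      exact ⟨x, hx, hy⟩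
    · rintro ⟨x, hx, hy⟩
      exact ⟨x, x, hx, hy, rfl⟩
  have hneg : negEqHat m ah bh ↔
      ∃ x ∈ m ⁻¹' {ah}, ∃ y ∈ m ⁻¹' {bh}, x ≠ y := by
    constructor
    · rintro ⟨x, y, hx, hy, h⟩; exact ⟨x, hx, y, hy, h⟩
    · rintro ⟨x, hx, y, hy, h⟩; exact ⟨x, y, hx, hy, h⟩
  refine ⟨?_, ?_, ?_⟩
  · rw [heq, hneg]
    push_neg
    constructor
    · rintro ⟨⟨c, hca, hcb⟩, h⟩
      have hAeq : ∀ a ∈ m ⁻¹' {ah}, a = c := fun a ha => h a ha c hcb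
      have hBeq : ∀ b ∈ m ⁻¹' {bh}, b = c := fun b hb => (h c hca b hb).symm
      have hA : m ⁻¹' {ah} = {c} := by
        ext z; simp only [Set.mem_singleton_iff]
        exact ⟨fun hz => hAeq z hz, fun hz => hz ▸ hca⟩
      have hB : m ⁻¹' {bh} = {c} := by
        ext z; simp only [Set.mem_singleton_iff]
        exact ⟨fun hz => hBeq z hz, fun hz => hz ▸ hcb⟩
      exact ⟨hA.trans hB.symm, c, hA⟩
    · rintro ⟨hAB, d, hA⟩
      refine ⟨⟨d, ?_, ?_⟩, ?_⟩
      · rw [hA]; rfl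
      · rw [← hAB, hA]; rfl
      · intro x hx y hy
        rw [hA] at hx
        rw [← hAB, hA] at hy
        exact hx.trans hy.symm
  · rw [heq, hneg, Set.disjoint_iff_inter_eq_empty]
    constructor
    · rintro ⟨_, h⟩
      refine ⟨hna, hnb, ?_⟩
      rw [Set.not_nonempty_iff_eq_empty] at h
      exact h
    · rintro ⟨_, _, hd⟩
      obtain ⟨a, ha⟩ := hna
      obtain ⟨b, hb⟩ := hnb
      refine ⟨⟨a, ha, b, hb, fun hab => ?_⟩, ?_⟩
      · have : a ∈ m ⁻¹' {ah} ∩ m ⁻¹' {bh} := ⟨ha, hab ▸ hb⟩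
        simp [hd] at this
      · rw [hd]; exact Set.not_nonempty_empty
  · rw [heq, hneg]
    constructor
    · rintro ⟨hi, x, hx, y, hy, hxy⟩
      exact ⟨hi, x, Or.inl hx, y, Or.inr hy, hxy⟩
    · rintro ⟨⟨c, hca, hcb⟩, x, hx, y, hy, hxy⟩
      refine ⟨⟨c, hca, hcb⟩, ?_⟩
      rcases hx with hx | hx <;> rcases hy with hy | hy
      · by_cases hxc : x = c
        · exact ⟨y, hy, c, hcb, fun h => hxy (hxc.trans h.symm)⟩
        · exact ⟨x, hx, c, hcb, hxc⟩
      · exact ⟨x, hx, y, hy, hxy⟩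
      · exact ⟨y, hy, x, hx, hxy.symm⟩
      · by_cases hxc : x = c
        · exact ⟨c, hca, y, hy, fun h => hxy (hxc.trans h)⟩
        · exact ⟨c, hca, x, hx, fun h => hxc h.symm⟩
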